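/- For κ > 0 a half-integer and N a nonzero integer, the pair S_{N,κ}(θ) = sin^{κ+1/2}θ · ( −√(cot(θ/2)) P_{|N|−1}^{(κ−1/2, κ+1/2)}(cos θ), sgn(N) √(tan(θ/2)) P_{|N|−1}^{(κ+1/2, κ−1/2)}(cos θ) ) is an eigenfunction of 𝔞_κ = iσ₂ d/dθ + (κ/sin θ)σ₁ on (0,π) with eigenvalue k = −sgn(N)(|N| + κ − 1/2). (It suffices to verify this for N = 1, i.e. P_0 ≡ 1.) -/

import Mathlib

open Real

/-- case `N = 1`, where the Jacobi polynomials are `≡ 1`: for `κ > 0`,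
`S_{1,κ}(θ) = sin^{κ+1/2}θ (−√(cot(θ/2)), √(tan(θ/2)))` is an eigenfunction of
`𝔞_κ (f,g)ᵀ = (g' + (κ/sinθ) g, −f' + (κ/sinθ) f)ᵀ` on `(0,π)` with eigenvalue
`k = −(κ + 1/2)`. -/
theorem angular_eigenfunction_N_one
    (kap : ℝ) (hkap : 0 < kap) :
    let f : ℝ → ℝ := fun θ =>
      -(Real.rpow (Real.sin θ) (kap + 1 / 2)) *
        Real.sqrt (Real.cos (θ / 2) / Real.sin (θ / 2))
    let g : ℝ → ℝ := fun θ =>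
      Real.rpow (Real.sin θ) (kap + 1 / 2) *
        Real.sqrt (Real.sin (θ / 2) / Real.cos (θ / 2))
    ∀ θ ∈ Set.Ioo 0 Real.pi,
      deriv g θ + (kap / Real.sin θ) * g θ = -(kap + 1 / 2) * f θ ∧
      -deriv f θ + (kap / Real.sin θ) * f θ = -(kap + 1 / 2) * g θ := by
  intro f g θ hθ
  set K : ℝ := (2:ℝ) ^ (kap + 1/2 : ℝ) with hK
  -- closed forms
  have hhalf : ∀ x ∈ Set.Ioo (0:ℝ) π, 0 < Real.sin (x/2) ∧ 0 < Real.cos (x/2) := by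
    intro x hx
    constructor
    · exact Real.sin_pos_of_pos_of_lt_pi (by linarith [hx.1]) (by linarith [hx.2, Real.pi_pos])
    · exact Real.cos_pos_of_mem_Ioo ⟨by linarith [hx.1, Real.pi_pos], by linarith [hx.2, Real.pi_pos]⟩
  have hsinx : ∀ x : ℝ, Real.sin x = 2 * Real.sin (x/2) * Real.cos (x/2) := by
    intro x
    have := Real.sin_two_mul (x/2)
    rw [show 2*(x/2) = x by ring] at this
    linarith
  have keyg : ∀ x ∈ Set.Ioo (0:ℝ) π,
      g x = K * (Real.sin (x/2) ^ (kap+1 : ℝ) * Real.cos (x/2) ^ (kap : ℝ)) := by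
    intro x hx
    obtain ⟨hs, hc⟩ := hhalf x hx
    show Real.sin x ^ (kap + 1/2 : ℝ) * Real.sqrt (Real.sin (x/2) / Real.cos (x/2)) = _
    rw [hsinx x, Real.sqrt_eq_rpow, Real.div_rpow hs.le hc.le]
    rw [show (2:ℝ) * Real.sin (x/2) * Real.cos (x/2) = 2 * (Real.sin (x/2) * Real.cos (x/2)) by ring,
      Real.mul_rpow (by norm_num) (by positivity), Real.mul_rpow hs.le hc.le]
    rw [show Real.sin (x/2) ^ (kap+1:ℝ)
        = Real.sin (x/2) ^ (kap+1/2:ℝ) * Real.sin (x/2) ^ (1/2:ℝ) by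
          rw [← Real.rpow_add hs]; congr 1; ring,
      show Real.cos (x/2) ^ (kap:ℝ)
        = Real.cos (x/2) ^ (kap+1/2:ℝ) / Real.cos (x/2) ^ (1/2:ℝ) by
          rw [← Real.rpow_sub hc]; congr 1; ring, hK]
    ring
  have keyf : ∀ x ∈ Set.Ioo (0:ℝ) π,
      f x = -(K * (Real.sin (x/2) ^ (kap : ℝ) * Real.cos (x/2) ^ (kap+1 : ℝ))) := by
    intro x hx
    obtain ⟨hs, hc⟩ := hhalf x hx
    show -(Real.sin x ^ (kap + 1/2 : ℝ)) * Real.sqrt (Real.cos (x/2) / Real.sin (x/2)) = _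
    rw [hsinx x, Real.sqrt_eq_rpow, Real.div_rpow hc.le hs.le]
    rw [show (2:ℝ) * Real.sin (x/2) * Real.cos (x/2) = 2 * (Real.sin (x/2) * Real.cos (x/2)) by ring,
      Real.mul_rpow (by norm_num) (by positivity), Real.mul_rpow hs.le hc.le]
    rw [show Real.cos (x/2) ^ (kap+1:ℝ)
        = Real.cos (x/2) ^ (kap+1/2:ℝ) * Real.cos (x/2) ^ (1/2:ℝ) by
          rw [← Real.rpow_add hc]; congr 1; ring,
      show Real.sin (x/2) ^ (kap:ℝ)
        = Real.sin (x/2) ^ (kap+1/2:ℝ) / Real.sin (x/2) ^ (1/2:ℝ) by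
          rw [← Real.rpow_sub hs]; congr 1; ring, hK]
    ring
  obtain ⟨hs, hc⟩ := hhalf θ hθ
  set s := Real.sin (θ/2) with hs'
  set c := Real.cos (θ/2) with hc'
  have hpyth : s^2 + c^2 = 1 := Real.sin_sq_add_cos_sq (θ/2)
  -- derivatives of the building blocks
  have hS : HasDerivAt (fun x => Real.sin (x/2)) (c * (1/2)) θ := by
    have := (Real.hasDerivAt_sin (θ/2)).comp θ ((hasDerivAt_id θ).div_const 2)
    simpa [Function.comp_def, hc'] using this
  have hC : HasDerivAt (fun x => Real.cos (x/2)) (-s * (1/2)) θ := by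
    have := (Real.hasDerivAt_cos (θ/2)).comp θ ((hasDerivAt_id θ).div_const 2)
    simpa [Function.comp_def, hs'] using this
  have hS1 : HasDerivAt (fun x => Real.sin (x/2) ^ (kap+1 : ℝ))
      ((c * (1/2)) * (kap+1) * s ^ (kap+1-1 : ℝ)) θ := hS.rpow_const (Or.inl hs.ne')
  have hSk : HasDerivAt (fun x => Real.sin (x/2) ^ (kap : ℝ))
      ((c * (1/2)) * kap * s ^ (kap-1 : ℝ)) θ := hS.rpow_const (Or.inl hs.ne')
  have hC1 : HasDerivAt (fun x => Real.cos (x/2) ^ (kap+1 : ℝ))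
      ((-s * (1/2)) * (kap+1) * c ^ (kap+1-1 : ℝ)) θ := hC.rpow_const (Or.inl hc.ne')
  have hCk : HasDerivAt (fun x => Real.cos (x/2) ^ (kap : ℝ))
      ((-s * (1/2)) * kap * c ^ (kap-1 : ℝ)) θ := hC.rpow_const (Or.inl hc.ne')
  have hG : HasDerivAt (fun x => K * (Real.sin (x/2) ^ (kap+1 : ℝ) * Real.cos (x/2) ^ (kap : ℝ)))
      (K * (((c * (1/2)) * (kap+1) * s ^ (kap+1-1 : ℝ)) * c ^ (kap : ℝ)
        + s ^ (kap+1 : ℝ) * ((-s * (1/2)) * kap * c ^ (kap-1 : ℝ)))) θ :=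
    (hS1.mul hCk).const_mul K
  have hF : HasDerivAt (fun x => -(K * (Real.sin (x/2) ^ (kap : ℝ) * Real.cos (x/2) ^ (kap+1 : ℝ))))
      (-(K * (((c * (1/2)) * kap * s ^ (kap-1 : ℝ)) * c ^ (kap+1 : ℝ)
        + s ^ (kap : ℝ) * ((-s * (1/2)) * (kap+1) * c ^ (kap+1-1 : ℝ))))) θ :=
    ((hSk.mul hC1).const_mul K).neg
  have hmemnhds : Set.Ioo (0:ℝ) π ∈ nhds θ := isOpen_Ioo.mem_nhds hθ
  have hgeq : g =ᶠ[nhds θ] fun x => K * (Real.sin (x/2) ^ (kap+1 : ℝ) * Real.cos (x/2) ^ (kap : ℝ)) :=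
    Filter.eventuallyEq_of_mem hmemnhds keyg
  have hfeq : f =ᶠ[nhds θ] fun x => -(K * (Real.sin (x/2) ^ (kap : ℝ) * Real.cos (x/2) ^ (kap+1 : ℝ))) :=
    Filter.eventuallyEq_of_mem hmemnhds keyf
  have hdg : deriv g θ = K * (((c * (1/2)) * (kap+1) * s ^ (kap+1-1 : ℝ)) * c ^ (kap : ℝ)
        + s ^ (kap+1 : ℝ) * ((-s * (1/2)) * kap * c ^ (kap-1 : ℝ))) := by
    rw [hgeq.deriv_eq]; exact hG.deriv
  have hdf : deriv f θ = -(K * (((c * (1/2)) * kap * s ^ (kap-1 : ℝ)) * c ^ (kap+1 : ℝ)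
        + s ^ (kap : ℝ) * ((-s * (1/2)) * (kap+1) * c ^ (kap+1-1 : ℝ)))) := by
    rw [hfeq.deriv_eq]; exact hF.deriv
  -- rewrite rpow combinations into s^kap, c^kap
  have es1 : s ^ (kap+1 : ℝ) = s ^ (kap : ℝ) * s := Real.rpow_add_one hs.ne' kap
  have ec1 : c ^ (kap+1 : ℝ) = c ^ (kap : ℝ) * c := Real.rpow_add_one hc.ne' kap
  have esm : s ^ (kap-1 : ℝ) = s ^ (kap : ℝ) / s := Real.rpow_sub_one hs.ne' kap
  have ecm : c ^ (kap-1 : ℝ) = c ^ (kap : ℝ) / c := Real.rpow_sub_one hc.ne' kap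
  have e10 : (kap+1-1 : ℝ) = kap := by ring
  rw [e10] at hdg hdf
  have hgθ : g θ = K * (s ^ (kap+1 : ℝ) * c ^ (kap : ℝ)) := keyg θ hθ
  have hfθ : f θ = -(K * (s ^ (kap : ℝ) * c ^ (kap+1 : ℝ))) := keyf θ hθ
  have hsinθ : Real.sin θ = 2 * s * c := hsinx θ
  set A := s ^ (kap : ℝ) with hA
  set B := c ^ (kap : ℝ) with hB
  constructor
  · rw [hdg, hgθ, hfθ, hsinθ]
    simp only [es1, ec1, esm, ecm]
    field_simp
    linear_combination (-(K * A * B * kap)) * hpyth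
  · rw [hdf, hgθ, hfθ, hsinθ]
    simp only [es1, ec1, esm, ecm]
    field_simp
    linear_combination (K * A * B * kap) * hpyth
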